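/- For every positive integer ℓ, the number of ordered pairs (ℓ₁, ℓ₂) of positive integers with ℓ₁ + ℓ₂ = ℓ and (1/2)·S(ℓ₁) + (1/2)·S(ℓ₂) ≤ (1/2)·S(ℓ) is exactly 2^{S(ℓ)} − 2. -/

import Mathlib

/-- `S ℓ` is the sum of the digits of `ℓ` in base 2. -/
def S (ℓ : ℕ) : ℕ := (Nat.digits 2 ℓ).sum
def fb (n : ℕ) : Finset ℕ := n.bitIndices.toFinset
def f (T : Finset ℕ) : ℕ := ∑ i ∈ T, 2 ^ i
lemma fb_f (T : Finset ℕ) : fb (f T) = T := Finset.toFinset_bitIndices_twoPowSum T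
lemma f_fb (n : ℕ) : f (fb n) = n := Finset.twoPowSum_toFinset_bitIndices n
lemma S_rec (n : ℕ) : S n = n % 2 + S (n / 2) := by
  rcases n.eq_zero_or_pos with rfl | h
  · simp [S]
  · rw [S, Nat.digits_def' (by norm_num) h]; simp [S]
@[simp] lemma fb_zero : fb 0 = ∅ := by simp [fb]
lemma fb_two_mul (n : ℕ) : fb (2 * n) = (fb n).image (· + 1) := by
  ext a; simp [fb, Nat.bitIndices_two_mul]
lemma fb_two_mul_add_one (n : ℕ) : fb (2 * n + 1) = insert 0 ((fb n).image (· + 1)) := by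
  ext a; simp [fb, Nat.bitIndices_two_mul_add_one]
lemma S_two_mul (n : ℕ) : S (2 * n) = S n := by
  rw [S_rec]; simp [Nat.mul_div_cancel_left n (by norm_num : 0 < 2)]
lemma S_two_mul_add_one (n : ℕ) : S (2 * n + 1) = S n + 1 := by
  rw [S_rec]; have h1 : (2 * n + 1) % 2 = 1 := by omega
  have h2 : (2 * n + 1) / 2 = n := by omega
  rw [h1, h2]; omega
lemma S_one : S 1 = 1 := by simp [S]

lemma S_subadd : ∀ n a b : ℕ, a + b = n → S n ≤ S a + S b := by
  intro n
  induction n using Nat.strong_induction_on with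
  | _ n IH =>
    intro a b hab
    rcases n.eq_zero_or_pos with rfl | hn
    · obtain ⟨rfl, rfl⟩ : a = 0 ∧ b = 0 := by omega
      simp
    rcases Nat.mod_two_eq_zero_or_one a with ha | ha <;>
      rcases Nat.mod_two_eq_zero_or_one b with hb | hb
    · -- both even
      have h1 : n = 2 * (a / 2 + b / 2) := by omega
      have h2 : S n ≤ S (a / 2) + S (b / 2) := by
        rw [h1, S_two_mul]; exact IH _ (by omega) _ _ rfl
      rw [S_rec a, S_rec b]; omega
    · have h1 : n = 2 * (a / 2 + b / 2) + 1 := by omega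
      have h2 : S n ≤ S (a / 2) + S (b / 2) + 1 := by
        rw [h1, S_two_mul_add_one]
        have := IH (a / 2 + b / 2) (by omega) (a / 2) (b / 2) rfl
        omega
      rw [S_rec a, S_rec b]; omega
    · have h1 : n = 2 * (a / 2 + b / 2) + 1 := by omega
      have h2 : S n ≤ S (a / 2) + S (b / 2) + 1 := by
        rw [h1, S_two_mul_add_one]
        have := IH (a / 2 + b / 2) (by omega) (a / 2) (b / 2) rfl
        omega
      rw [S_rec a, S_rec b]; omega
    · -- both odd
      have h1 : n = 2 * (a / 2 + b / 2 + 1) := by omega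
      have h3 : S (a / 2 + b / 2 + 1) ≤ S (a / 2 + b / 2) + 1 := by
        have := IH (a / 2 + b / 2 + 1) (by omega) (a / 2 + b / 2) 1 rfl
        rwa [S_one] at this
      have h4 : S (a / 2 + b / 2) ≤ S (a / 2) + S (b / 2) := by
        rcases Nat.eq_zero_or_pos (a / 2 + b / 2) with h | h
        · obtain ⟨e1, e2⟩ : a / 2 = 0 ∧ b / 2 = 0 := by omega
          simp [e1, e2, h]
        · exact IH _ (by omega) _ _ rfl
      have h2 : S n = S (a / 2 + b / 2 + 1) := by rw [h1, S_two_mul]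
      rw [S_rec a, S_rec b]; omega

lemma S_eq_disjoint : ∀ n a b : ℕ, a + b = n → S a + S b ≤ S n →
    Disjoint (fb a) (fb b) ∧ fb a ∪ fb b = fb n := by
  intro n
  induction n using Nat.strong_induction_on with
  | _ n IH =>
    intro a b hab hle
    rcases n.eq_zero_or_pos with rfl | hn
    · obtain ⟨rfl, rfl⟩ : a = 0 ∧ b = 0 := by omega
      simp
    rcases Nat.mod_two_eq_zero_or_one a with ha | ha <;>
      rcases Nat.mod_two_eq_zero_or_one b with hb | hb
    · -- both even
      have h1 : n = 2 * (a / 2 + b / 2) := by omega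
      have hle' : S (a / 2) + S (b / 2) ≤ S (a / 2 + b / 2) := by
        rw [h1, S_two_mul] at hle; rw [S_rec a, S_rec b] at hle; omega
      obtain ⟨hd, hu⟩ := IH (a / 2 + b / 2) (by omega) _ _ rfl hle'
      obtain ⟨a', rfl⟩ : ∃ m, a = 2 * m := ⟨a / 2, by omega⟩
      obtain ⟨b', rfl⟩ : ∃ m, b = 2 * m := ⟨b / 2, by omega⟩
      have e1 : (2 * a') / 2 = a' := by omega
      have e2 : (2 * b') / 2 = b' := by omega
      rw [e1, e2] at hd hu
      rw [fb_two_mul, fb_two_mul, h1, fb_two_mul, e1, e2]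
      constructor
      · exact Finset.disjoint_image (add_left_injective 1) |>.mpr hd
      · rw [← Finset.image_union, hu]
    · -- a even, b odd
      have h1 : n = 2 * (a / 2 + b / 2) + 1 := by omega
      have hle' : S (a / 2) + S (b / 2) ≤ S (a / 2 + b / 2) := by
        rw [h1, S_two_mul_add_one] at hle; rw [S_rec a, S_rec b] at hle; omega
      obtain ⟨hd, hu⟩ := IH (a / 2 + b / 2) (by omega) _ _ rfl hle'
      obtain ⟨a', rfl⟩ : ∃ m, a = 2 * m := ⟨a / 2, by omega⟩
      obtain ⟨b', rfl⟩ : ∃ m, b = 2 * m + 1 := ⟨b / 2, by omega⟩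
      have e1 : (2 * a') / 2 = a' := by omega
      have e2 : (2 * b' + 1) / 2 = b' := by omega
      rw [e1, e2] at hd hu
      rw [fb_two_mul, fb_two_mul_add_one, h1, fb_two_mul_add_one, e1, e2]
      constructor
      · rw [Finset.disjoint_insert_right]
        exact ⟨by simp, Finset.disjoint_image (add_left_injective 1) |>.mpr hd⟩
      · rw [Finset.union_insert, ← Finset.image_union, hu]
    · -- a odd, b even
      have h1 : n = 2 * (a / 2 + b / 2) + 1 := by omega
      have hle' : S (a / 2) + S (b / 2) ≤ S (a / 2 + b / 2) := by
        rw [h1, S_two_mul_add_one] at hle; rw [S_rec a, S_rec b] at hle; omega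
      obtain ⟨hd, hu⟩ := IH (a / 2 + b / 2) (by omega) _ _ rfl hle'
      obtain ⟨a', rfl⟩ : ∃ m, a = 2 * m + 1 := ⟨a / 2, by omega⟩
      obtain ⟨b', rfl⟩ : ∃ m, b = 2 * m := ⟨b / 2, by omega⟩
      have e1 : (2 * a' + 1) / 2 = a' := by omega
      have e2 : (2 * b') / 2 = b' := by omega
      rw [e1, e2] at hd hu
      rw [fb_two_mul, fb_two_mul_add_one, h1, fb_two_mul_add_one, e1, e2]
      constructor
      · rw [Finset.disjoint_insert_left]
        exact ⟨by simp, Finset.disjoint_image (add_left_injective 1) |>.mpr hd⟩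
      · rw [Finset.insert_union, ← Finset.image_union, hu]
    · -- both odd: contradiction
      exfalso
      have h1 : n = 2 * (a / 2 + b / 2 + 1) := by omega
      have h3 : S (a / 2 + b / 2 + 1) ≤ S (a / 2 + b / 2) + 1 := by
        have := S_subadd (a / 2 + b / 2 + 1) (a / 2 + b / 2) 1 rfl
        rwa [S_one] at this
      have h4 : S (a / 2 + b / 2) ≤ S (a / 2) + S (b / 2) :=
        S_subadd _ _ _ rfl
      rw [h1, S_two_mul] at hle
      rw [S_rec a, S_rec b] at hle
      omega

lemma S_card : ∀ n, (fb n).card = S n := by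
  intro n
  induction n using Nat.strong_induction_on with
  | _ n IH =>
    rcases n.eq_zero_or_pos with rfl | h
    · simp [S]
    rcases Nat.mod_two_eq_zero_or_one n with h2 | h2
    · obtain ⟨m, rfl⟩ : ∃ m, n = 2 * m := ⟨n / 2, by omega⟩
      rw [fb_two_mul, Finset.card_image_of_injective _ (add_left_injective 1),
        IH m (by omega), S_two_mul]
    · obtain ⟨m, rfl⟩ : ∃ m, n = 2 * m + 1 := ⟨n / 2, by omega⟩
      rw [fb_two_mul_add_one, Finset.card_insert_of_notMem (by simp),
        Finset.card_image_of_injective _ (add_left_injective 1), IH m (by omega),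
        S_two_mul_add_one]

lemma f_eq_zero_iff {T : Finset ℕ} : f T = 0 ↔ T = ∅ := by
  constructor
  · intro h; rw [← fb_f T, h, fb_zero]
  · rintro rfl; simp [f]

theorem stmt_4 (ℓ : ℕ) (hℓ : 0 < ℓ) :
    Nat.card {p : ℕ × ℕ // 0 < p.1 ∧ 0 < p.2 ∧ p.1 + p.2 = ℓ ∧
        (S p.1 : ℚ) / 2 + (S p.2 : ℚ) / 2 ≤ (S ℓ : ℚ) / 2} =
      2 ^ S ℓ - 2 := by
  classical
  set B : Finset ℕ := fb ℓ with hB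
  set F : Finset (ℕ × ℕ) :=
    (B.powerset.filter (fun T => T ≠ ∅ ∧ T ≠ B)).image
      (fun T => (f T, f (B \ T))) with hF
  -- the rational inequality is the natural one
  have hq : ∀ x y z : ℕ, ((x : ℚ) / 2 + (y : ℚ) / 2 ≤ (z : ℚ) / 2) ↔ x + y ≤ z := by
    intro x y z
    rw [← add_div, div_le_div_iff_of_pos_right (by norm_num : (0:ℚ) < 2)]
    exact_mod_cast Iff.rfl
  have hiff : ∀ p : ℕ × ℕ, (0 < p.1 ∧ 0 < p.2 ∧ p.1 + p.2 = ℓ ∧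
      (S p.1 : ℚ) / 2 + (S p.2 : ℚ) / 2 ≤ (S ℓ : ℚ) / 2) ↔ p ∈ F := by
    rintro ⟨a, b⟩
    simp only [hF, Finset.mem_image, Finset.mem_filter, Finset.mem_powerset]
    constructor
    · rintro ⟨ha, hb, hab, hle⟩
      rw [hq] at hle
      obtain ⟨hd, hu⟩ := S_eq_disjoint ℓ a b hab hle
      refine ⟨fb a, ⟨?_, ?_, ?_⟩, ?_⟩
      · rw [hB, ← hu]; exact Finset.subset_union_left
      · intro h
        rw [← f_fb a, h] at ha; simp [f] at ha
      · intro h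
        have : fb b = ∅ := by
          have h2 : B \ fb a = fb b := by
            rw [hB, ← hu, Finset.union_sdiff_cancel_left hd]
          rw [← h2, h, Finset.sdiff_self]
        rw [← f_fb b, this] at hb; simp [f] at hb
      · have h2 : B \ fb a = fb b := by
          rw [hB, ← hu, Finset.union_sdiff_cancel_left hd]
        rw [h2, f_fb, f_fb]
    · rintro ⟨T, ⟨hTB, hT0, hTB'⟩, heq⟩
      rw [Prod.mk.injEq] at heq
      obtain ⟨rfl, rfl⟩ := heq
      have hBT : B \ T ≠ ∅ := by
        intro h
        exact hTB' (Finset.Subset.antisymm hTB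
          (by rwa [← Finset.sdiff_eq_empty_iff_subset]))
      have hsum : f T + f (B \ T) = ℓ := by
        rw [f, f, ← Finset.sum_union Finset.disjoint_sdiff,
          Finset.union_sdiff_of_subset hTB, hB]
        exact f_fb ℓ
      refine ⟨?_, ?_, hsum, ?_⟩
      · exact Nat.pos_of_ne_zero (fun h => hT0 (f_eq_zero_iff.mp h))
      · exact Nat.pos_of_ne_zero (fun h => hBT (f_eq_zero_iff.mp h))
      · rw [hq]
        have e1 : S (f T) = T.card := by rw [← S_card, fb_f]
        have e2 : S (f (B \ T)) = (B \ T).card := by rw [← S_card, fb_f]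
        have e3 : T.card + (B \ T).card = B.card := by
          rw [add_comm]; exact Finset.card_sdiff_add_card_eq_card hTB
        rw [e1, e2, e3, hB, S_card]
  -- now count
  rw [Nat.card_congr (Equiv.subtypeEquivRight hiff), Nat.card_eq_fintype_card,
    Fintype.card_coe]
  have hinj : Set.InjOn (fun T => (f T, f (B \ T)))
      ↑(B.powerset.filter (fun T => T ≠ ∅ ∧ T ≠ B)) := by
    intro T1 _ T2 _ h
    have := congrArg (fun p : ℕ × ℕ => fb p.1) h
    simpa only [fb_f] using this
  rw [hF, Finset.card_image_of_injOn hinj]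
  have hftr : B.powerset.filter (fun T => T ≠ ∅ ∧ T ≠ B) = B.powerset \ {∅, B} := by
    ext T
    simp only [Finset.mem_filter, Finset.mem_sdiff, Finset.mem_insert,
      Finset.mem_singleton, not_or]
  have hBne : B ≠ ∅ := by
    intro h
    have := f_fb ℓ
    rw [← hB, h] at this
    simp [f] at this
    omega
  have hsub : ({∅, B} : Finset (Finset ℕ)) ⊆ B.powerset := by
    intro T hT
    simp only [Finset.mem_insert, Finset.mem_singleton] at hT
    rcases hT with rfl | rfl <;> simp [Finset.mem_powerset]
  rw [hftr, Finset.card_sdiff_of_subset hsub, Finset.card_powerset,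
    Finset.card_insert_of_notMem (by simpa using (Ne.symm hBne)),
    Finset.card_singleton, hB, S_card]
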